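/- For any positive integer n, the function r ↦ (r/n) · n_[r]/n^r for r = 1, …, n defines a probability distribution: ∑_{r=1}^{n} (r/n) · n_[r]/n^r = 1, where n_[r] is the falling factorial. -/

import Mathlib

open Finset

theorem stmt_3 (n : ℕ) (hn : 0 < n) :
    ∑ r ∈ Finset.Icc 1 n, ((r : ℝ) / n) * ((n.descFactorial r : ℝ) / (n : ℝ) ^ r) = 1 := by
  have hn' : (n : ℝ) ≠ 0 := Nat.cast_ne_zero.mpr hn.ne'
  set f : ℕ → ℝ := fun r => (n.descFactorial r : ℝ) / (n : ℝ) ^ r with hf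
  have key : ∀ r ∈ Finset.Icc 1 n,
      ((r : ℝ) / n) * ((n.descFactorial r : ℝ) / (n : ℝ) ^ r) = f r - f (r + 1) := by
    intro r hr
    obtain ⟨h1, h2⟩ := Finset.mem_Icc.mp hr
    simp only [hf]
    rw [Nat.descFactorial_succ, Nat.cast_mul, Nat.cast_sub h2, pow_succ]
    field_simp
    ring
  rw [Finset.sum_congr rfl key, show Finset.Icc 1 n = Finset.Ico 1 (n+1) by rw [Finset.Ico_add_one_right_eq_Icc],
    Finset.sum_Ico_eq_sum_range]
  simp only [Nat.add_sub_cancel]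
  simp only [add_assoc]
  rw [Finset.sum_range_sub' (fun i => f (1 + i)) n]
  have h1 : f 1 = 1 := by
    simp [hf, Nat.descFactorial_one, div_self hn']
  have h2 : f (1 + n) = 0 := by
    have hz : n.descFactorial (1 + n) = 0 :=
      Nat.descFactorial_eq_zero_iff_lt.mpr (by omega)
    simp [hf, hz]
  simp only [add_zero] at *
  rw [h1, h2, sub_zero]
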